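/- arXiv:2005.12893 — 7 statements merged into one kernel-verified Lean document; each statement's English description precedes it below -/
import Mathlib

section
/- Let k ≥ 1 be an integer and let ℓ be an integer with −k/2 ≤ ℓ ≤ k/2 − 1 if k is even, and −(k+1)/2 ≤ ℓ ≤ (k−1)/2 if k is odd. Define γ := 1/2 + (i/2) · sin((2ℓ+1)π/(k+1)) / (1 + cos((2ℓ+1)π/(k+1))) ∈ ℂ. Then γ + conj(γ) = 1 and γ^{k+1} + (conj(γ))^{k+1} = 0; i.e. the pair (γ1, γ2) = (γ, conj(γ)) solves the two order conditions γ1 + γ2 = 1 and γ1^{k+1} + γ2^{k+1} = 0. -/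
open Complex

/-- **Formula (4) of the paper.**
For `k ≥ 1` and `ℓ` in the stated range, the complex number
`γ = 1/2 + (i/2)·sin((2ℓ+1)π/(k+1))/(1 + cos((2ℓ+1)π/(k+1)))`
together with its conjugate solves the order conditions
`γ1 + γ2 = 1` and `γ1^{k+1} + γ2^{k+1} = 0`. -/
theorem order_conditions_solutions
    (k : ℕ) (hk : 1 ≤ k) (ℓ : ℤ)
    (heven : Even k → -(k : ℝ) / 2 ≤ (ℓ : ℝ) ∧ (ℓ : ℝ) ≤ (k : ℝ) / 2 - 1)
    (hodd : Odd k → -((k : ℝ) + 1) / 2 ≤ (ℓ : ℝ) ∧ (ℓ : ℝ) ≤ ((k : ℝ) - 1) / 2)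
    (γ : ℂ)
    (hγ : γ = 1 / 2 + (Complex.I / 2) *
      ((Real.sin ((2 * (ℓ : ℝ) + 1) * Real.pi / ((k : ℝ) + 1)) /
        (1 + Real.cos ((2 * (ℓ : ℝ) + 1) * Real.pi / ((k : ℝ) + 1)))) : ℝ)) :
    γ + (starRingEnd ℂ) γ = 1 ∧ γ ^ (k + 1) + ((starRingEnd ℂ) γ) ^ (k + 1) = 0 := by
  have hk1 : (0:ℝ) < (k:ℝ) + 1 := by positivity
  have hπ := Real.pi_pos
  set θ : ℝ := (2 * (ℓ : ℝ) + 1) * Real.pi / ((k : ℝ) + 1) with hθ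
  set α : ℝ := θ / 2 with hα
  -- bound |2ℓ+1| ≤ k
  have hbound : |2 * (ℓ:ℝ) + 1| ≤ (k:ℝ) := by
    have hk' : (1:ℝ) ≤ (k:ℝ) := by exact_mod_cast hk
    rcases Nat.even_or_odd k with he | ho
    · obtain ⟨h1, h2⟩ := heven he
      rw [abs_le]; constructor <;> linarith
    · obtain ⟨h1, h2⟩ := hodd ho
      rw [abs_le]; constructor <;> linarith
  have hαabs : |α| < Real.pi / 2 := by
    have h0 : α = (2 * (ℓ:ℝ) + 1) * (Real.pi / (2 * ((k:ℝ) + 1))) := by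
      rw [hα, hθ]; field_simp
    rw [h0, abs_mul,
      abs_of_pos (show (0:ℝ) < Real.pi / (2 * ((k:ℝ) + 1)) by positivity)]
    calc |2 * (ℓ:ℝ) + 1| * (Real.pi / (2 * ((k:ℝ) + 1)))
        ≤ (k:ℝ) * (Real.pi / (2 * ((k:ℝ) + 1))) := by
          apply mul_le_mul_of_nonneg_right hbound (by positivity)
      _ < ((k:ℝ) + 1) * (Real.pi / (2 * ((k:ℝ) + 1))) := by
          apply mul_lt_mul_of_pos_right (by linarith) (by positivity)
      _ = Real.pi / 2 := by field_simp
  have hc : 0 < Real.cos α := by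
    apply Real.cos_pos_of_mem_Ioo
    rw [abs_lt] at hαabs
    exact ⟨by linarith [hαabs.1], hαabs.2⟩
  have hcne : (Real.cos α : ℂ) ≠ 0 := by exact_mod_cast hc.ne'
  have hsc : Real.sin θ / (1 + Real.cos θ) = Real.sin α / Real.cos α := by
    have h2α : θ = 2 * α := by rw [hα]; ring
    rw [h2α, Real.sin_two_mul, Real.cos_two_mul]
    have h3 : 1 + (2 * Real.cos α ^ 2 - 1) = 2 * Real.cos α ^ 2 := by ring
    rw [h3]
    rw [div_eq_div_iff (by positivity) hc.ne']
    ring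
  have hkα : ((k:ℝ) + 1) * α = (2 * (ℓ:ℝ) + 1) * Real.pi / 2 := by
    rw [hα, hθ]; field_simp
  clear_value θ α
  have hcos0 : Real.cos (((k:ℝ) + 1) * α) = 0 := by
    rw [hkα]
    have h4 : (2 * (ℓ:ℝ) + 1) * Real.pi / 2 = (ℓ:ℝ) * Real.pi + Real.pi / 2 := by ring
    rw [h4, Real.cos_add, Real.cos_pi_div_two, Real.sin_pi_div_two, Real.sin_int_mul_pi]
    ring
  have hγ' : γ = Complex.exp ((α : ℂ) * Complex.I) / (2 * (Real.cos α : ℂ)) := by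
    have hcne' : Complex.cos (α:ℂ) ≠ 0 := by rw [← Complex.ofReal_cos]; exact hcne
    rw [hγ, hsc, Complex.exp_mul_I, ← Complex.ofReal_cos, ← Complex.ofReal_sin,
      Complex.ofReal_div]
    field_simp [hcne']
  have hconj : (starRingEnd ℂ) γ
      = Complex.exp (-((α : ℂ) * Complex.I)) / (2 * (Real.cos α : ℂ)) := by
    rw [hγ', map_div₀, ← Complex.exp_conj, map_mul, Complex.conj_ofReal, Complex.conj_I,
      map_mul, map_ofNat, Complex.conj_ofReal]
    ring_nf
  have hexpneg : ∀ β : ℝ, Complex.exp (-((β : ℂ) * Complex.I))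
      = (Real.cos β : ℂ) - (Real.sin β : ℂ) * Complex.I := by
    intro β
    have : -((β : ℂ) * Complex.I) = ((-β : ℝ) : ℂ) * Complex.I := by push_cast; ring
    rw [this, Complex.exp_mul_I, ← Complex.ofReal_cos, ← Complex.ofReal_sin,
      Real.cos_neg, Real.sin_neg]
    push_cast; ring
  constructor
  · rw [hconj, hγ', ← add_div, hexpneg, Complex.exp_mul_I,
      ← Complex.ofReal_cos, ← Complex.ofReal_sin]
    rw [div_eq_one_iff_eq (by simpa using hcne)]
    ring
  · rw [hconj, hγ', div_pow, div_pow, ← add_div, ← Complex.exp_nat_mul,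
      ← Complex.exp_nat_mul]
    have e1 : (↑(k+1) : ℂ) * ((α : ℂ) * Complex.I)
        = ((((k:ℝ)+1) * α : ℝ) : ℂ) * Complex.I := by push_cast; ring
    have e2 : (↑(k+1) : ℂ) * -((α : ℂ) * Complex.I)
        = -(((((k:ℝ)+1) * α : ℝ) : ℂ) * Complex.I) := by push_cast; ring
    rw [e1, e2, hexpneg, Complex.exp_mul_I, ← Complex.ofReal_cos, ← Complex.ofReal_sin,
      hcos0]
    simp
end

section
/- Let d ≥ 1, q ∈ ℕ, and let S_z : ℂ^d → ℂ^d, defined for z ∈ ℂ with |z| < z0, be a family of bijections which is conjugation-equivariant (conj(S_z(x)) = S_{conj(z)}(conj(x)) for all x, z), uniformly Lipschitz on a compact set K' ⊆ ℂ^d containing the compact set K and all relevant images, and pseudo-symmetric of order q on K': there is C1 > 0 with ‖(S_{−z})^{−1}(x) − S_z(x)‖ ≤ C1 |z|^{q+1} for all x ∈ K', |z| < z0. Let γ ∈ ℂ and, for real τ, define ψ_τ := S_{γτ} ∘ S_{conj(γ)τ}. Then there exist C2 > 0 and τ1 > 0 such that for all real |τ| < τ1 and all x ∈ K, ‖conj(ψ_τ(conj(x)))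 − (ψ_{−τ})^{−1}(x)‖ ≤ C2 |τ|^{q+1}; i.e. the complex-conjugate method coincides with the adjoint method up to O(τ^{q+1}). -/
/-- **Key intermediate relation (eq. 16) in the proof of Proposition 2.**
If `S_z` is conjugation-equivariant, uniformly Lipschitz, and pseudo-symmetric of order `q`,
then for `ψ_τ = S_{γτ} ∘ S_{γ̄τ}` the complex-conjugate method coincides with the adjoint
method up to `O(τ^{q+1})`:
`conj(ψ_τ(conj x)) = (ψ_{-τ})⁻¹(x) + O(τ^{q+1})` uniformly on `K`. -/
theorem conjugate_equals_adjoint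
    (d q : ℕ) (hd : 1 ≤ d) (z0 : ℝ) (hz0 : 0 < z0)
    (K K' : Set (Fin d → ℂ)) (hK : IsCompact K) (hK' : IsCompact K') (hKK' : K ⊆ K')
    (S : ℂ → (Fin d → ℂ) → (Fin d → ℂ))
    (hbij : ∀ z : ℂ, ‖z‖ < z0 → Function.Bijective (S z))
    -- `K'` contains all relevant images
    (himg : ∀ z : ℂ, ‖z‖ < z0 →
      S z '' K' ⊆ K' ∧ Function.invFun (S (-z)) '' K' ⊆ K' ∧ star '' K' ⊆ K')
    -- conjugation-equivariance
    (hSconj : ∀ (z : ℂ) (x : Fin d → ℂ), star (S z x) = S ((starRingEnd ℂ) z) (star x))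
    -- uniform Lipschitz bound on `K'`
    (hLip : ∃ L : ℝ, 0 ≤ L ∧ ∀ z : ℂ, ‖z‖ < z0 → ∀ x ∈ K', ∀ y ∈ K',
      ‖S z x - S z y‖ ≤ L * ‖x - y‖)
    -- pseudo-symmetry of order q on `K'`
    (C1 : ℝ) (hC1 : 0 < C1)
    (hpsym : ∀ z : ℂ, ‖z‖ < z0 → ∀ x ∈ K',
      ‖Function.invFun (S (-z)) x - S z x‖ ≤ C1 * ‖z‖ ^ (q + 1))
    -- the composed method
    (γ : ℂ)
    (ψ : ℝ → (Fin d → ℂ) → (Fin d → ℂ))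
    (hψ : ∀ (τ : ℝ) (x : Fin d → ℂ), ψ τ x = S (γ * τ) (S ((starRingEnd ℂ) γ * τ) x)) :
    ∃ C2 > 0, ∃ τ1 > 0, ∀ τ : ℝ, |τ| < τ1 → ∀ x ∈ K,
      ‖star (ψ τ (star x)) - Function.invFun (ψ (-τ)) x‖ ≤ C2 * |τ| ^ (q + 1) := by
  obtain ⟨L, hL0, hLipb⟩ := hLip
  refine ⟨(L + 1) * C1 * (‖γ‖ + 1) ^ (q + 1), by positivity, z0 / (‖γ‖ + 1),
    by positivity, ?_⟩
  intro τ hτ x hxK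
  have hγ1 : (0:ℝ) < ‖γ‖ + 1 := by positivity
  have hx' : x ∈ K' := hKK' hxK
  set a : ℂ := γ * (τ : ℂ) with ha
  set b : ℂ := (starRingEnd ℂ) γ * (τ : ℂ) with hb
  have hna' : ‖a‖ = ‖γ‖ * |τ| := by
    rw [ha, norm_mul, Complex.norm_real, Real.norm_eq_abs]
  have hnb' : ‖b‖ = ‖γ‖ * |τ| := by
    rw [hb, norm_mul, Complex.norm_real, Real.norm_eq_abs]
    congr 1
    exact RCLike.norm_conj γ
  have hlt : ‖γ‖ * |τ| < z0 := by
    have h1 : ‖γ‖ * |τ| ≤ (‖γ‖ + 1) * |τ| := by nlinarith [abs_nonneg τ]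
    have h2 : (‖γ‖ + 1) * |τ| < (‖γ‖ + 1) * (z0 / (‖γ‖ + 1)) := by
      exact mul_lt_mul_of_pos_left hτ hγ1
    have h3 : (‖γ‖ + 1) * (z0 / (‖γ‖ + 1)) = z0 := by field_simp
    linarith
  have hna : ‖a‖ < z0 := by rw [hna']; exact hlt
  have hnb : ‖b‖ < z0 := by rw [hnb']; exact hlt
  have hnma : ‖-a‖ < z0 := by rwa [norm_neg]
  have hnmb : ‖-b‖ < z0 := by rwa [norm_neg]
  -- conjugates
  have hca : (starRingEnd ℂ) a = b := by
    rw [ha, hb, map_mul, Complex.conj_ofReal]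
  have hcb : (starRingEnd ℂ) b = a := by
    rw [ha, hb, map_mul, Complex.conj_ofReal, RingHomCompTriple.comp_apply,
      RingHom.id_apply]
  -- LHS computation: star (ψ τ (star x)) = S b (S a x)
  have hLHS : star (ψ τ (star x)) = S b (S a x) := by
    rw [hψ, hSconj, hSconj, star_star, hca, hcb]
  -- RHS computation
  set u : Fin d → ℂ := Function.invFun (S (-a)) x with hu
  set v : Fin d → ℂ := Function.invFun (S (-b)) u with hv
  have hSau : S (-a) u = x := Function.rightInverse_invFun (hbij (-a) hnma).2 x
  have hSbv : S (-b) v = u := Function.rightInverse_invFun (hbij (-b) hnmb).2 u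
  have hψv : ψ (-τ) v = x := by
    have h1 : γ * ((-τ : ℝ) : ℂ) = -a := by push_cast; ring
    have h2 : (starRingEnd ℂ) γ * ((-τ : ℝ) : ℂ) = -b := by push_cast; ring
    rw [hψ, h1, h2, hSbv, hSau]
  have hψbij : Function.Bijective (ψ (-τ)) := by
    have : ψ (-τ) = S (-a) ∘ S (-b) := by
      funext y
      have h1 : γ * ((-τ : ℝ) : ℂ) = -a := by push_cast; ring
      have h2 : (starRingEnd ℂ) γ * ((-τ : ℝ) : ℂ) = -b := by push_cast; ring
      rw [hψ, h1, h2, Function.comp_apply]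
    rw [this]
    exact (hbij (-a) hnma).comp (hbij (-b) hnmb)
  have hRHS : Function.invFun (ψ (-τ)) x = v := by
    apply hψbij.1
    rw [Function.rightInverse_invFun hψbij.2 x, hψv]
  -- memberships
  have hSax : S a x ∈ K' := (himg a hna).1 ⟨x, hx', rfl⟩
  have huK : u ∈ K' := (himg a hna).2.1 ⟨x, hx', rfl⟩
  -- bounds
  have hb1 : ‖S b (S a x) - S b u‖ ≤ L * (C1 * ‖a‖ ^ (q + 1)) := by
    have h1 := hLipb b hnb (S a x) hSax u huK
    have h2 := hpsym a hna x hx'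
    have h3 : ‖S a x - u‖ = ‖u - S a x‖ := norm_sub_rev _ _
    calc ‖S b (S a x) - S b u‖ ≤ L * ‖S a x - u‖ := h1
      _ ≤ L * (C1 * ‖a‖ ^ (q + 1)) := by
          rw [h3]; exact mul_le_mul_of_nonneg_left h2 hL0
  have hb2 : ‖S b u - v‖ ≤ C1 * ‖b‖ ^ (q + 1) := by
    rw [norm_sub_rev]
    exact hpsym b hnb u huK
  rw [hLHS, hRHS]
  have htri : ‖S b (S a x) - v‖ ≤ ‖S b (S a x) - S b u‖ + ‖S b u - v‖ := by
    have := norm_add_le (S b (S a x) - S b u) (S b u - v)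
    simpa using this
  have hpow : ‖a‖ ^ (q + 1) ≤ (‖γ‖ + 1) ^ (q + 1) * |τ| ^ (q + 1) := by
    rw [hna', ← mul_pow]
    apply pow_le_pow_left₀ (by positivity)
    nlinarith [abs_nonneg τ]
  have hCpos : (0:ℝ) ≤ C1 := le_of_lt hC1
  calc ‖S b (S a x) - v‖ ≤ ‖S b (S a x) - S b u‖ + ‖S b u - v‖ := htri
    _ ≤ L * (C1 * ‖a‖ ^ (q + 1)) + C1 * ‖b‖ ^ (q + 1) := add_le_add hb1 hb2
    _ = (L + 1) * C1 * ‖a‖ ^ (q + 1) := by rw [hnb', ← hna']; ring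
    _ ≤ (L + 1) * C1 * ((‖γ‖ + 1) ^ (q + 1) * |τ| ^ (q + 1)) := by
        apply mul_le_mul_of_nonneg_left hpow; positivity
    _ = (L + 1) * C1 * (‖γ‖ + 1) ^ (q + 1) * |τ| ^ (q + 1) := by ring
end

section
/- For j ∈ {1, 2, 3} let γ^{[2j]} := 1/2 + (i/2) tan(π/(2(2j+1))). For every i ∈ {1, 2, 3} and every choice of signs ε_1, …, ε_i ∈ {+1, −1}, let c_j := γ^{[2j]} if ε_j = +1 and c_j := conj(γ^{[2j]}) if ε_j = −1. Then the principal argument of the product c_1 c_2 ⋯ c_i equals (π/2) · Σ_{j=1}^{i} ε_j/(2j+1), and in particular, since Σ_{j=1}^{3} 1/(2j+1) = 71/105 ≤ 1, the real part of c_1 c_2 ⋯ c_i is strictly positive. -/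
open Finset


lemma aux_polar (α : ℝ) (hα : 0 < Real.cos α) (e : ℤ) (he : e = 1 ∨ e = -1) :
    (if e = 1 then (1 / 2 + (Complex.I / 2) * ((Real.tan α : ℝ) : ℂ))
      else (starRingEnd ℂ) (1 / 2 + (Complex.I / 2) * ((Real.tan α : ℝ) : ℂ))) =
    ((1 / (2 * Real.cos α) : ℝ) : ℂ) * Complex.exp ((((e : ℝ) * α : ℝ) : ℂ) * Complex.I) := by
  have hC : Complex.cos ((α : ℝ) : ℂ) ≠ 0 := by
    rw [← Complex.ofReal_cos]; exact_mod_cast hα.ne'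
  rcases he with h | h
  · rw [if_pos h, h]
    simp only [Int.cast_one, one_mul, Complex.exp_mul_I, Complex.ofReal_tan,
      Complex.tan_eq_sin_div_cos, Complex.ofReal_cos, Complex.ofReal_sin,
      Complex.ofReal_div, Complex.ofReal_mul, Complex.ofReal_one, Complex.ofReal_ofNat]
    field_simp
  · rw [if_neg (by rw [h]; norm_num), h]
    have h1 : (starRingEnd ℂ) (Complex.sin ((α : ℝ) : ℂ)) = Complex.sin ((α : ℝ) : ℂ) := by
      rw [← Complex.ofReal_sin, Complex.conj_ofReal]
    have h2 : (starRingEnd ℂ) (Complex.cos ((α : ℝ) : ℂ)) = Complex.cos ((α : ℝ) : ℂ) := by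
      rw [← Complex.ofReal_cos, Complex.conj_ofReal]
    simp only [h1, h2, Int.cast_neg, Int.cast_one, neg_one_mul, Complex.ofReal_neg, Complex.ofReal_mul,
      Complex.exp_mul_I, Complex.cos_neg, Complex.sin_neg, map_add, map_mul, map_div₀,
      map_one, map_ofNat, Complex.conj_I, Complex.conj_ofReal, Complex.ofReal_tan,
      Complex.tan_eq_sin_div_cos, Complex.ofReal_cos, Complex.ofReal_sin,
      Complex.ofReal_div, Complex.ofReal_one, Complex.ofReal_ofNat]
    field_simp

/-- **Section 3 of the paper.**
The coefficients of the recursive construction `R̂⁽¹⁾, R̂⁽²⁾, R̂⁽³⁾` starting from a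
second-order method are products `c_1 ⋯ c_i` with `c_j ∈ {γ^{[2j]}, conj γ^{[2j]}}`.
Their principal argument is `(π/2) Σ_{j=1}^i ε_j/(2j+1)`, and since
`Σ_{j=1}^3 1/(2j+1) = 71/105 ≤ 1`, all of them have strictly positive real part. -/
theorem coefficients_positive_real_part
    (γ : ℕ → ℂ)
    (hγ : ∀ k : ℕ, γ k = 1 / 2 + (Complex.I / 2) *
      (Real.tan (Real.pi / (2 * ((k : ℝ) + 1))) : ℝ))
    (i : ℕ) (hi : i ∈ ({1, 2, 3} : Set ℕ))
    (ε : ℕ → ℤ) (hε : ∀ j, ε j = 1 ∨ ε j = -1)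
    (c : ℕ → ℂ)
    (hc : ∀ j, c j = if ε j = 1 then γ (2 * j) else (starRingEnd ℂ) (γ (2 * j))) :
    (∑ j ∈ Finset.Icc (1 : ℕ) 3, (1 : ℝ) / (2 * (j : ℝ) + 1)) = 71 / 105 ∧
    Complex.arg (∏ j ∈ Finset.Icc 1 i, c j) =
      (Real.pi / 2) * ∑ j ∈ Finset.Icc 1 i, (ε j : ℝ) / (2 * (j : ℝ) + 1) ∧
    0 < (∏ j ∈ Finset.Icc 1 i, c j).re := by
  have pi_pos := Real.pi_pos
  -- the angle for index j
  set a : ℕ → ℝ := fun j => Real.pi / (2 * ((2 * j : ℝ) + 1)) with ha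
  have hi3 : i ≤ 3 := by
    simp only [Set.mem_insert_iff, Set.mem_singleton_iff] at hi
    rcases hi with h | h | h <;> omega
  have hapos : ∀ j : ℕ, 1 ≤ j → 0 < a j ∧ a j < Real.pi / 2 := by
    intro j hj
    constructor
    · apply div_pos pi_pos
      positivity
    · rw [ha]
      have h3 : (3 : ℝ) ≤ 2 * (j : ℝ) + 1 := by
        have : (1 : ℝ) ≤ (j : ℝ) := by exact_mod_cast hj
        linarith
      rw [div_lt_div_iff₀ (by linarith) (by norm_num)]
      nlinarith
  have hcos : ∀ j : ℕ, 1 ≤ j → 0 < Real.cos (a j) := by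
    intro j hj
    obtain ⟨h1, h2⟩ := hapos j hj
    exact Real.cos_pos_of_mem_Ioo ⟨by linarith, h2⟩
  -- polar form of c j
  have hcform : ∀ j ∈ Finset.Icc 1 i, c j =
      ((1 / (2 * Real.cos (a j)) : ℝ) : ℂ) *
        Complex.exp ((((ε j : ℝ) * a j : ℝ) : ℂ) * Complex.I) := by
    intro j hj
    have hj1 : 1 ≤ j := (Finset.mem_Icc.mp hj).1
    have hcj := hcos j hj1
    have hγ2j : γ (2 * j) = 1 / 2 + (Complex.I / 2) * ((Real.tan (a j) : ℝ) : ℂ) := by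
      rw [hγ]; push_cast [ha]; ring_nf
    rw [hc, hγ2j]
    exact aux_polar (a j) hcj (ε j) (hε j)
  -- the total angle
  set S : ℝ := ∑ j ∈ Finset.Icc 1 i, (ε j : ℝ) * a j with hS
  have hprod : (∏ j ∈ Finset.Icc 1 i, c j) =
      ((∏ j ∈ Finset.Icc 1 i, (1 / (2 * Real.cos (a j)) : ℝ)) : ℝ) *
        Complex.exp ((S : ℂ) * Complex.I) := by
    rw [Finset.prod_congr rfl hcform, Finset.prod_mul_distrib, ← Complex.exp_sum]
    push_cast
    rw [← Finset.sum_mul]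
    push_cast [hS]
    ring
  have hRpos : 0 < ∏ j ∈ Finset.Icc 1 i, (1 / (2 * Real.cos (a j)) : ℝ) := by
    apply Finset.prod_pos
    intro j hj
    have := hcos j (Finset.mem_Icc.mp hj).1
    positivity
  -- bound on S
  have hSbound : |S| < Real.pi / 2 := by
    have h1 : |S| ≤ ∑ j ∈ Finset.Icc 1 i, |(ε j : ℝ) * a j| := Finset.abs_sum_le_sum_abs _ _
    have h2 : ∀ j ∈ Finset.Icc 1 i, |(ε j : ℝ) * a j| = a j := by
      intro j hj
      have h0 := (hapos j (Finset.mem_Icc.mp hj).1).1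
      rcases hε j with h | h <;> rw [h] <;> push_cast <;>
        simp [abs_of_pos h0, abs_of_neg (neg_neg_iff_pos.mpr h0)]
    rw [Finset.sum_congr rfl h2] at h1
    have h3 : ∑ j ∈ Finset.Icc 1 i, a j ≤ ∑ j ∈ Finset.Icc 1 3, a j := by
      apply Finset.sum_le_sum_of_subset_of_nonneg
      · exact Finset.Icc_subset_Icc_right hi3
      · intro j hj _
        exact (hapos j (Finset.mem_Icc.mp hj).1).1.le
    have h4 : ∑ j ∈ Finset.Icc 1 3, a j = Real.pi * (71 / 210) := by
      rw [show Finset.Icc 1 3 = {1, 2, 3} by rfl]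
      simp [ha]
      push_cast
      ring
    have : Real.pi * (71 / 210) < Real.pi / 2 := by nlinarith
    linarith
  have hSIoc : S ∈ Set.Ioc (-Real.pi) Real.pi := by
    rw [abs_lt] at hSbound
    constructor <;> [linarith; linarith]
  have harg : Complex.arg (∏ j ∈ Finset.Icc 1 i, c j) = S := by
    rw [hprod, Complex.arg_real_mul _ hRpos, Complex.exp_mul_I,
      Complex.arg_cos_add_sin_mul_I hSIoc]
  have hSval : S = (Real.pi / 2) * ∑ j ∈ Finset.Icc 1 i, (ε j : ℝ) / (2 * (j : ℝ) + 1) := by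
    rw [hS, Finset.mul_sum]
    apply Finset.sum_congr rfl
    intro j hj
    rw [ha]
    have : (2 * (j : ℝ) + 1) ≠ 0 := by positivity
    field_simp
  refine ⟨?_, by rw [harg, hSval], ?_⟩
  · rw [show Finset.Icc (1:ℕ) 3 = {1, 2, 3} by rfl]
    norm_num
  · rw [hprod]
    simp only [Complex.re_ofReal_mul, Complex.exp_ofReal_mul_I_re]
    apply mul_pos hRpos
    rw [abs_lt] at hSbound
    exact Real.cos_pos_of_mem_Ioo ⟨by linarith, hSbound.2⟩
end

section
/- Let b1 := 1/10 − i/30, b2 := 4/15 + (2/15)i, b3 := 4/15 − (1/5)i ∈ ℂ. Then the maximum of |Arg(b1)|, |Arg(b2)|, |Arg(b3)| equals arccos(4/5), where Arg denotes the principal argument; explicitly, |Arg(b3)| = arccos(4/5), |Arg(b1)| = arctan(1/3) ≤ arccos(4/5) and |Arg(b2)| = arctan(1/2) ≤ arccos(4/5). -/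
lemma div_sqrt_eq' (a b : ℝ) (ha : 0 ≤ a) :
    a / Real.sqrt b = Real.sqrt (a ^ 2 / b) := by
  rw [Real.sqrt_div (sq_nonneg a), Real.sqrt_sq ha]

lemma arccos_45 : Real.arccos (4 / 5) = Real.arctan (3 / 4) := by
  rw [Real.arccos_eq_arctan (by norm_num)]
  rw [show (1 - (4 / 5 : ℝ) ^ 2) = (3 / 5) ^ 2 by norm_num,
    Real.sqrt_sq (by norm_num)]
  norm_num

/-- **Section 3 of the paper, maximal argument of the coefficients of scheme (16).**
For the coefficients `b1 = 1/10 - i/30`, `b2 = 4/15 + 2i/15`, `b3 = 4/15 - i/5` of the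
fourth-order symmetric splitting scheme, one has `|Arg b1| = arctan(1/3)`,
`|Arg b2| = arctan(1/2)`, `|Arg b3| = arccos(4/5)`, both arctangents are at most
`arccos(4/5)`, and hence the maximum of the three arguments is `arccos(4/5)`. -/
theorem max_argument_s4sim
    (b1 b2 b3 : ℂ)
    (hb1 : b1 = 1 / 10 - Complex.I / 30)
    (hb2 : b2 = 4 / 15 + (2 / 15) * Complex.I)
    (hb3 : b3 = 4 / 15 - (1 / 5) * Complex.I) :
    |Complex.arg b3| = Real.arccos (4 / 5) ∧
    |Complex.arg b1| = Real.arctan (1 / 3) ∧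
    |Complex.arg b2| = Real.arctan (1 / 2) ∧
    Real.arctan (1 / 3) ≤ Real.arccos (4 / 5) ∧
    Real.arctan (1 / 2) ≤ Real.arccos (4 / 5) ∧
    max (max |Complex.arg b1| |Complex.arg b2|) |Complex.arg b3| =
      Real.arccos (4 / 5) := by
  have hre1 : b1.re = 1 / 10 := by rw [hb1]; simp
  have him1 : b1.im = -(1 / 30) := by rw [hb1]; simp
  have hre2 : b2.re = 4 / 15 := by rw [hb2]; simp
  have him2 : b2.im = 2 / 15 := by rw [hb2]; simp
  have hre3 : b3.re = 4 / 15 := by rw [hb3]; simp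
  have him3 : b3.im = -(1 / 5) := by rw [hb3]; simp
  have habs1 : ‖b1‖ = Real.sqrt (1 / 90) := by
    rw [Complex.norm_def, Complex.normSq_apply, hre1, him1]; norm_num
  have habs2 : ‖b2‖ = Real.sqrt (4 / 45) := by
    rw [Complex.norm_def, Complex.normSq_apply, hre2, him2]; norm_num
  have habs3 : ‖b3‖ = 1 / 3 := by
    rw [Complex.norm_def, Complex.normSq_apply, hre3, him3]
    rw [show (4 / 15 * (4 / 15) + -(1 / 5) * -(1 / 5) : ℝ) = (1 / 3) ^ 2 by norm_num]
    exact Real.sqrt_sq (by norm_num)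
  -- arg b3
  have harg3 : Complex.arg b3 = -Real.arccos (4 / 5) := by
    rw [Complex.arg_of_im_neg (by rw [him3]; norm_num), hre3, habs3]
    norm_num
  have h3 : |Complex.arg b3| = Real.arccos (4 / 5) := by
    rw [harg3, abs_neg, abs_of_nonneg (Real.arccos_nonneg _)]
  -- arg b1
  have h1 : |Complex.arg b1| = Real.arctan (1 / 3) := by
    rw [Complex.arg_of_re_nonneg (by rw [hre1]; norm_num), him1, habs1,
      Real.arctan_eq_arcsin, neg_div, Real.arcsin_neg, abs_neg,
      div_sqrt_eq' (1/30) _ (by norm_num), div_sqrt_eq' (1/3) _ (by norm_num)]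
    rw [abs_of_nonneg (Real.arcsin_nonneg.2 (Real.sqrt_nonneg _))]
    congr 2
    norm_num
  -- arg b2
  have h2 : |Complex.arg b2| = Real.arctan (1 / 2) := by
    rw [Complex.arg_of_re_nonneg (by rw [hre2]; norm_num), him2, habs2,
      Real.arctan_eq_arcsin, div_sqrt_eq' _ _ (by norm_num : (0:ℝ) ≤ 2/15),
      div_sqrt_eq' (1/2) _ (by norm_num)]
    rw [abs_of_nonneg (Real.arcsin_nonneg.2 (Real.sqrt_nonneg _))]
    congr 2
    norm_num
  have hle1 : Real.arctan (1 / 3) ≤ Real.arccos (4 / 5) := by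
    rw [arccos_45]; exact Real.arctan_strictMono.monotone (by norm_num)
  have hle2 : Real.arctan (1 / 2) ≤ Real.arccos (4 / 5) := by
    rw [arccos_45]; exact Real.arctan_strictMono.monotone (by norm_num)
  refine ⟨h3, h1, h2, hle1, hle2, ?_⟩
  rw [h1, h2, h3]
  exact max_eq_right (max_le hle1 hle2)
end

section
/- Let θ4 := arccos(4/5). Then (2θ4)/π + Σ_{j=1}^{4} 1/(2j+3) = (2θ4)/π + 1888/3465 < 1. Consequently, for every complex number b with |Arg(b)| ≤ θ4 and b ≠ 0, every i ∈ {0, 1, 2, 3, 4} and every choice of signs ε_1, …, ε_i ∈ {+1, −1}, the product b · c_1 ⋯ c_i has strictly positive real part, where c_j := γ^{[2j+2]} if ε_j = +1 and c_j := conj(γ^{[2j+2]}) if ε_j = −1, with γ^{[k]} := 1/2 + (i/2) tan(π/(2(k+1))). -/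
open Finset

lemma aux_arg {θ : ℝ} (h0 : 0 < θ) (h1 : θ < Real.pi/2) :
    Complex.arg (1/2 + (Complex.I/2) * (Real.tan θ : ℝ)) = θ := by
  have hc : 0 < Real.cos θ := Real.cos_pos_of_mem_Ioo ⟨by linarith, h1⟩
  have hc' : (Real.cos θ : ℂ) ≠ 0 := by exact_mod_cast hc.ne'
  have key : ((2*Real.cos θ : ℝ) : ℂ) * (1/2 + (Complex.I/2) * (Real.tan θ : ℝ))
      = ↑(Real.cos θ) + ↑(Real.sin θ) * Complex.I := by
    rw [Real.tan_eq_sin_div_cos]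
    push_cast at hc' ⊢
    field_simp [hc']
  have harg : Complex.arg (↑(Real.cos θ) + ↑(Real.sin θ) * Complex.I) = θ := by
    have := Complex.arg_cos_add_sin_mul_I (θ := θ)
      ⟨by linarith [Real.pi_pos], by linarith [Real.pi_pos]⟩
    simpa using this
  calc Complex.arg (1/2 + (Complex.I/2) * (Real.tan θ : ℝ))
      = Complex.arg (((2*Real.cos θ : ℝ) : ℂ) * (1/2 + (Complex.I/2) * (Real.tan θ : ℝ))) :=
        (Complex.arg_real_mul _ (by positivity)).symm
    _ = θ := by rw [key, harg]

lemma aux_ne {θ : ℝ} : (1/2 + (Complex.I/2) * (Real.tan θ : ℝ) : ℂ) ≠ 0 := by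
  intro h
  have := congrArg Complex.re h
  simp [Complex.add_re, Complex.mul_re] at this

lemma theta4_le : Real.arccos (4/5) ≤ 2/3 := by
  have habs : |(2/3:ℝ)| = 2/3 := _root_.abs_of_nonneg (by norm_num)
  have hcb := Real.cos_bound (x := (2/3 : ℝ)) (by rw [habs]; norm_num)
  rw [habs] at hcb
  have h := (abs_sub_le_iff.1 hcb).1
  have hcos : Real.cos (2/3) ≤ 4/5 := by nlinarith
  have h1 : Real.arcsin (Real.cos (2/3)) ≤ Real.arcsin (4/5) :=
    Real.monotone_arcsin hcos
  have h2 : Real.arccos (Real.cos (2/3)) = 2/3 :=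
    Real.arccos_cos (by norm_num) (by linarith [Real.pi_gt_three])
  rw [Real.arccos_eq_pi_div_two_sub_arcsin] at h2 ⊢
  linarith

lemma arg_bound_mul {z w : ℂ} {A B : ℝ} (hz : z ≠ 0) (hw : w ≠ 0)
    (hA : |Complex.arg z| ≤ A) (hB : |Complex.arg w| ≤ B) (hAB : A + B < Real.pi) :
    |Complex.arg (z*w)| ≤ A + B := by
  have h1 := abs_le.1 hA
  have h2 := abs_le.1 hB
  have hmem : Complex.arg z + Complex.arg w ∈ Set.Ioc (-Real.pi) Real.pi :=
    ⟨by linarith, by linarith⟩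
  rw [Complex.arg_mul hz hw hmem]
  calc |Complex.arg z + Complex.arg w| ≤ |Complex.arg z| + |Complex.arg w| := abs_add_le _ _
    _ ≤ A + B := add_le_add hA hB

/-- **Section 3 of the paper, positivity starting from a fourth-order method.**
With `θ4 = arccos(4/5)` one has `2θ4/π + Σ_{j=1}^4 1/(2j+3) = 2θ4/π + 1888/3465 < 1`.
Hence, for any nonzero `b` with `|Arg b| ≤ θ4` and any choice of
`c_j ∈ {γ^{[2j+2]}, conj γ^{[2j+2]}}` for `j = 1, …, i` with `i ≤ 4`, the product
`b · c_1 ⋯ c_i` has strictly positive real part. -/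
theorem coefficients_positive_from_fourth_order
    (θ4 : ℝ) (hθ4 : θ4 = Real.arccos (4 / 5))
    (γ : ℕ → ℂ)
    (hγ : ∀ k : ℕ, γ k = 1 / 2 + (Complex.I / 2) *
      (Real.tan (Real.pi / (2 * ((k : ℝ) + 1))) : ℝ)) :
    (∑ j ∈ Finset.Icc (1 : ℕ) 4, (1 : ℝ) / (2 * (j : ℝ) + 3)) = 1888 / 3465 ∧
    2 * θ4 / Real.pi + 1888 / 3465 < 1 ∧
    ∀ b : ℂ, b ≠ 0 → |Complex.arg b| ≤ θ4 →
      ∀ i ∈ ({0, 1, 2, 3, 4} : Set ℕ),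
        ∀ ε : ℕ → ℤ, (∀ j, ε j = 1 ∨ ε j = -1) →
          ∀ c : ℕ → ℂ,
            (∀ j, c j = if ε j = 1 then γ (2 * j + 2)
              else (starRingEnd ℂ) (γ (2 * j + 2))) →
            0 < (b * ∏ j ∈ Finset.Icc 1 i, c j).re := by
  have hπ := Real.pi_pos
  have hπ3 := Real.pi_gt_three
  have hθ4nn : 0 ≤ θ4 := hθ4 ▸ Real.arccos_nonneg _
  have hθ4le : θ4 ≤ 2/3 := hθ4 ▸ theta4_le
  have part1 : (∑ j ∈ Finset.Icc (1 : ℕ) 4, (1 : ℝ) / (2 * (j : ℝ) + 3)) = 1888 / 3465 := by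
    rw [show Finset.Icc (1:ℕ) 4 = {1, 2, 3, 4} from rfl]
    norm_num [Finset.sum_insert, Finset.mem_insert]
  have part2 : 2 * θ4 / Real.pi + 1888 / 3465 < 1 := by
    have h49 : 2 * θ4 / Real.pi < 4/9 := by
      rw [div_lt_iff₀ hπ]
      nlinarith
    linarith
  refine ⟨part1, part2, ?_⟩
  intro b hb hab i hi ε hε c hc
  -- facts about c j
  have hcfact : ∀ j : ℕ, c j ≠ 0 ∧
      |Complex.arg (c j)| ≤ Real.pi / (2 * (2 * (j:ℝ) + 3)) := by
    intro j
    set θ : ℝ := Real.pi / (2 * (2 * (j:ℝ) + 3)) with hθdef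
    have hjnn : (0:ℝ) ≤ (j:ℝ) := Nat.cast_nonneg j
    have h0 : 0 < θ := by positivity
    have h1 : θ < Real.pi / 2 := by
      rw [hθdef, div_lt_div_iff₀ (by positivity) (by norm_num)]
      nlinarith
    have hγeq : γ (2*j+2) = 1/2 + (Complex.I/2) * (Real.tan θ : ℝ) := by
      have := hγ (2*j+2)
      rw [this]
      norm_num [hθdef]
      push_cast
      ring_nf
    have hne : γ (2*j+2) ≠ 0 := by rw [hγeq]; exact aux_ne
    have harg : Complex.arg (γ (2*j+2)) = θ := by rw [hγeq]; exact aux_arg h0 h1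
    rcases hε j with h | h
    · rw [hc j, if_pos h]
      exact ⟨hne, by rw [harg, abs_of_pos h0]⟩
    · rw [hc j, if_neg (by rw [h]; decide)]
      refine ⟨by simpa using hne, ?_⟩
      rw [Complex.arg_conj, harg, if_neg (by linarith)]
      rw [abs_neg, abs_of_pos h0]
  -- induction
  have main : ∀ n : ℕ, n ≤ 4 → (b * ∏ j ∈ Finset.Icc 1 n, c j) ≠ 0 ∧
      |Complex.arg (b * ∏ j ∈ Finset.Icc 1 n, c j)| ≤
        θ4 + ∑ j ∈ Finset.Icc 1 n, Real.pi / (2 * (2 * (j:ℝ) + 3)) := by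
    intro n
    induction n with
    | zero => intro _; simpa using ⟨hb, hab⟩
    | succ m ih =>
      intro hm4
      obtain ⟨hne, hbd⟩ := ih (by omega)
      have hSm : (∑ j ∈ Finset.Icc 1 m, Real.pi / (2 * (2 * (j:ℝ) + 3)))
          ≤ (m:ℝ) * (Real.pi / 10) := by
        have := Finset.sum_le_card_nsmul (Finset.Icc 1 m)
          (fun j => Real.pi / (2 * (2 * (j:ℝ) + 3))) (Real.pi / 10) ?_
        · simpa [Nat.card_Icc, nsmul_eq_mul] using this
        · intro j hj
          have hj1 : 1 ≤ j := (Finset.mem_Icc.1 hj).1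
          have : (1:ℝ) ≤ (j:ℝ) := by exact_mod_cast hj1
          rw [div_le_div_iff₀ (by positivity) (by norm_num)]
          nlinarith
      have hterm : Real.pi / (2 * (2 * ((m:ℝ)+1) + 3)) ≤ Real.pi / 10 := by
        have hmnn : (0:ℝ) ≤ (m:ℝ) := Nat.cast_nonneg m
        rw [div_le_div_iff₀ (by positivity) (by norm_num)]
        nlinarith
      have hm3 : (m:ℝ) ≤ 3 := by exact_mod_cast Nat.lt_succ_iff.mp (by omega : m < 4)
      have hABπ : (θ4 + ∑ j ∈ Finset.Icc 1 m, Real.pi / (2 * (2 * (j:ℝ) + 3)))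
          + Real.pi / (2 * (2 * ((m:ℝ)+1) + 3)) < Real.pi := by
        nlinarith
      obtain ⟨hcne, hcbd⟩ := hcfact (m+1)
      rw [Finset.prod_Icc_succ_top (by omega), Finset.sum_Icc_succ_top (by omega),
        ← mul_assoc]
      constructor
      · exact mul_ne_zero hne hcne
      · have hfin := arg_bound_mul hne hcne hbd (by push_cast at hcbd ⊢; exact hcbd) hABπ
        push_cast at hfin ⊢
        linarith
  -- conclude
  have hi4 : i ≤ 4 := by
    simp only [Set.mem_insert_iff, Set.mem_singleton_iff] at hi
    rcases hi with rfl | rfl | rfl | rfl | rfl <;> norm_num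
  obtain ⟨hne, hbd⟩ := main i hi4
  have hS4 : (∑ j ∈ Finset.Icc 1 i, Real.pi / (2 * (2 * (j:ℝ) + 3)))
      ≤ Real.pi / 2 * (1888 / 3465) := by
    have hsub : (∑ j ∈ Finset.Icc 1 i, Real.pi / (2 * (2 * (j:ℝ) + 3)))
        ≤ ∑ j ∈ Finset.Icc (1:ℕ) 4, Real.pi / (2 * (2 * (j:ℝ) + 3)) := by
      apply Finset.sum_le_sum_of_subset_of_nonneg (Finset.Icc_subset_Icc_right hi4)
      intro j _ _; positivity
    have heq : (∑ j ∈ Finset.Icc (1:ℕ) 4, Real.pi / (2 * (2 * (j:ℝ) + 3)))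
        = Real.pi / 2 * (1888 / 3465) := by
      rw [← part1, Finset.mul_sum]
      apply Finset.sum_congr rfl
      intro j hj
      have : (0:ℝ) < 2 * (j:ℝ) + 3 := by positivity
      field_simp
    linarith
  have hhalf : θ4 + Real.pi / 2 * (1888 / 3465) < Real.pi / 2 := by
    have h1 : 2 * θ4 / Real.pi < 1 - 1888/3465 := by linarith
    have h2 : 2 * θ4 < (1 - 1888/3465) * Real.pi := (div_lt_iff₀ hπ).mp h1
    linarith
  have hlt : |Complex.arg (b * ∏ j ∈ Finset.Icc 1 i, c j)| < Real.pi / 2 := by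
    calc |Complex.arg (b * ∏ j ∈ Finset.Icc 1 i, c j)|
        ≤ θ4 + ∑ j ∈ Finset.Icc 1 i, Real.pi / (2 * (2 * (j:ℝ) + 3)) := hbd
      _ ≤ θ4 + Real.pi / 2 * (1888 / 3465) := by linarith
      _ < Real.pi / 2 := hhalf
  rcases Complex.abs_arg_lt_pi_div_two_iff.mp hlt with h | h
  · exact h
  · exact absurd h hne
end

section
/- For z ∈ ℂ let A(z) denote the 2×2 complex matrix with rows (1 − z²/2, z − z³/4) and (−z, 1 − z²/2). Let γ := 1/2 + i√3/6 and for real τ define R(τ) as the entrywise real part of A(γτ)·A(conj(γ)τ), and let M_H(τ) be the rotation matrix with rows (cos τ, sin τ) and (−sin τ, cos τ). Then as τ → 0: the (1,1) and (2,2) entries of M_H(τ) − R(τ) are O(τ⁶), the (1,2) entry equals −τ⁵/180 + O(τ⁶), and the (2,1) entry equals −τ⁵/120 + O(τ⁶). In particular R(τ) approximates the exact harmonic-oscillator propagator M_H(τ) to order 4. -/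
open Asymptotics Filter

private lemma sqrt3_sq : ((Real.sqrt 3 : ℝ) : ℂ) ^ 2 = 3 := by
  rw [← Complex.ofReal_pow, Real.sq_sqrt (by norm_num : (3:ℝ) ≥ 0)]
  norm_num

private lemma exp_partial_sum (τ : ℝ) :
    (∑ m ∈ Finset.range 6, ((τ : ℂ) * Complex.I) ^ m / m.factorial)
      = ((1 - τ^2/2 + τ^4/24 : ℝ) : ℂ) + ((τ - τ^3/6 + τ^5/120 : ℝ) : ℂ) * Complex.I := by
  simp only [Finset.sum_range_succ, Finset.sum_range_zero, Nat.factorial]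
  push_cast
  linear_combination ((τ:ℂ)^2/2 + (τ:ℂ)^3*Complex.I/6 + (τ:ℂ)^4*(Complex.I^2-1)/24
    + (τ:ℂ)^5*Complex.I*(Complex.I^2-1)/120) * Complex.I_sq

private lemma cos_sin_bound (τ : ℝ) (h : |τ| ≤ 1) :
    |Real.cos τ - (1 - τ^2/2 + τ^4/24)| ≤ |τ|^6 ∧
    |Real.sin τ - (τ - τ^3/6 + τ^5/120)| ≤ |τ|^6 := by
  have hx : ‖(τ : ℂ) * Complex.I‖ ≤ 1 := by
    simpa using h
  have hb := Complex.exp_bound hx (n := 6) (by norm_num)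
  rw [exp_partial_sum] at hb
  have hexp : Complex.exp ((τ : ℂ) * Complex.I)
      = ((Real.cos τ : ℝ) : ℂ) + ((Real.sin τ : ℝ) : ℂ) * Complex.I := by
    rw [Complex.exp_mul_I, Complex.ofReal_cos, Complex.ofReal_sin]
  rw [hexp] at hb
  have key : ‖((Real.cos τ - (1 - τ^2/2 + τ^4/24) : ℝ) : ℂ)
      + ((Real.sin τ - (τ - τ^3/6 + τ^5/120) : ℝ) : ℂ) * Complex.I‖ ≤ |τ|^6 := by
    have h1 : (((Real.cos τ - (1 - τ^2/2 + τ^4/24) : ℝ) : ℂ)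
        + ((Real.sin τ - (τ - τ^3/6 + τ^5/120) : ℝ) : ℂ) * Complex.I)
        = (((Real.cos τ : ℝ) : ℂ) + ((Real.sin τ : ℝ) : ℂ) * Complex.I)
          - (((1 - τ^2/2 + τ^4/24 : ℝ) : ℂ) + ((τ - τ^3/6 + τ^5/120 : ℝ) : ℂ) * Complex.I) := by
      push_cast; ring
    rw [h1]
    refine hb.trans ?_
    have h2 : ‖(τ : ℂ) * Complex.I‖ = |τ| := by
      simp
    rw [h2]
    have h3 : (0:ℝ) ≤ |τ|^6 := by positivity
    norm_num [Nat.factorial]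
    nlinarith [h3]
  constructor
  · have := Complex.abs_re_le_norm (((Real.cos τ - (1 - τ^2/2 + τ^4/24) : ℝ) : ℂ)
      + ((Real.sin τ - (τ - τ^3/6 + τ^5/120) : ℝ) : ℂ) * Complex.I)
    simp only [Complex.add_re, Complex.ofReal_re, Complex.mul_re, Complex.I_re,
      Complex.I_im, Complex.ofReal_im, mul_zero, mul_one, zero_sub, sub_zero,
      neg_zero, add_zero] at this
    exact this.trans key
  · have := Complex.abs_im_le_norm (((Real.cos τ - (1 - τ^2/2 + τ^4/24) : ℝ) : ℂ)
      + ((Real.sin τ - (τ - τ^3/6 + τ^5/120) : ℝ) : ℂ) * Complex.I)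
    simp only [Complex.add_im, Complex.ofReal_im, Complex.mul_im, Complex.I_re,
      Complex.I_im, Complex.ofReal_re, mul_zero, mul_one, zero_add, zero_mul, add_zero] at this
    exact this.trans key

private lemma cosO :
    (fun τ : ℝ => Real.cos τ - (1 - τ^2/2 + τ^4/24)) =O[nhds 0] fun τ : ℝ => τ ^ 6 := by
  rw [isBigO_iff]
  refine ⟨1, ?_⟩
  filter_upwards [Metric.ball_mem_nhds (0:ℝ) one_pos] with τ hτ
  have h1 : |τ| ≤ 1 := le_of_lt (by simpa [Real.dist_eq] using hτ)
  have := (cos_sin_bound τ h1).1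
  simpa [abs_pow] using this

private lemma sinO :
    (fun τ : ℝ => Real.sin τ - (τ - τ^3/6 + τ^5/120)) =O[nhds 0] fun τ : ℝ => τ ^ 6 := by
  rw [isBigO_iff]
  refine ⟨1, ?_⟩
  filter_upwards [Metric.ball_mem_nhds (0:ℝ) one_pos] with τ hτ
  have h1 : |τ| ≤ 1 := le_of_lt (by simpa [Real.dist_eq] using hτ)
  have := (cos_sin_bound τ h1).2
  simpa [abs_pow] using this

private lemma pow6O : (fun τ : ℝ => τ ^ 6) =O[nhds 0] fun τ : ℝ => τ ^ 5 := by
  rw [isBigO_iff]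
  refine ⟨1, ?_⟩
  filter_upwards [Metric.ball_mem_nhds (0:ℝ) one_pos] with τ hτ
  have h1 : |τ| ≤ 1 := le_of_lt (by simpa [Real.dist_eq] using hτ)
  have h0 : (0:ℝ) ≤ |τ| := abs_nonneg τ
  simp only [Real.norm_eq_abs, abs_pow, one_mul]
  calc |τ|^6 = |τ|^5 * |τ| := by ring
    _ ≤ |τ|^5 * 1 := by gcongr
    _ = |τ|^5 := by ring

private lemma pow5O (c : ℝ) : (fun τ : ℝ => τ ^ 5 / c) =O[nhds 0] fun τ : ℝ => τ ^ 5 := by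
  have := (isBigO_refl (fun τ : ℝ => τ ^ 5) (nhds 0)).const_mul_left c⁻¹
  simpa [div_eq_mul_inv, mul_comm] using this

private lemma map_fin_two (f : ℂ → ℝ) (a b c d : ℂ) :
    (!![a, b; c, d]).map f = !![f a, f b; f c, f d] := by
  ext i j
  fin_cases i <;> fin_cases j <;> simp [Matrix.map_apply]

/-- **Table 1 of the paper, truncation-error entry for `R̂⁽¹⁾`.**
For the leapfrog matrix `A(z)` of the harmonic oscillator and `γ = 1/2 + i√3/6`, with
`R(τ) = Re(A(γτ)·A(γ̄τ))` and `M_H(τ)` the exact rotation matrix, the entries of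
`M_H(τ) - R(τ)` satisfy: the diagonal ones are `O(τ⁶)`, the `(1,2)` entry is
`-τ⁵/180 + O(τ⁶)`, the `(2,1)` entry is `-τ⁵/120 + O(τ⁶)`; in particular all entries
are `O(τ⁵)`, i.e. `R` is a method of order `4`. -/
theorem truncation_error_R1_harmonic_oscillator
    (A : ℂ → Matrix (Fin 2) (Fin 2) ℂ)
    (hA : ∀ z : ℂ, A z = !![1 - z ^ 2 / 2, z - z ^ 3 / 4; -z, 1 - z ^ 2 / 2])
    (γ : ℂ) (hγ : γ = 1 / 2 + Complex.I * (Real.sqrt 3 : ℝ) / 6)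
    (R : ℝ → Matrix (Fin 2) (Fin 2) ℝ)
    (hR : ∀ τ : ℝ, R τ = (A (γ * τ) * A ((starRingEnd ℂ) γ * τ)).map Complex.re)
    (MH : ℝ → Matrix (Fin 2) (Fin 2) ℝ)
    (hMH : ∀ τ : ℝ, MH τ = !![Real.cos τ, Real.sin τ; -Real.sin τ, Real.cos τ]) :
    ((fun τ : ℝ => (MH τ - R τ) 0 0) =O[nhds 0] fun τ : ℝ => τ ^ 6) ∧
    ((fun τ : ℝ => (MH τ - R τ) 1 1) =O[nhds 0] fun τ : ℝ => τ ^ 6) ∧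
    ((fun τ : ℝ => (MH τ - R τ) 0 1 + τ ^ 5 / 180) =O[nhds 0] fun τ : ℝ => τ ^ 6) ∧
    ((fun τ : ℝ => (MH τ - R τ) 1 0 + τ ^ 5 / 120) =O[nhds 0] fun τ : ℝ => τ ^ 6) ∧
    (∀ i j : Fin 2, (fun τ : ℝ => (MH τ - R τ) i j) =O[nhds 0] fun τ : ℝ => τ ^ 5) := by
  have hγc : (starRingEnd ℂ) γ = 1 / 2 - Complex.I * (Real.sqrt 3 : ℝ) / 6 := by
    rw [hγ]
    simp [map_add, map_mul, map_div₀, map_ofNat, map_one, Complex.conj_I, Complex.conj_ofReal]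
    ring
  -- Explicit form of R
  have hRval : ∀ τ : ℝ, R τ
      = !![1 - τ^2/2 + τ^4/24, τ - τ^3/6 + τ^5/72; -τ + τ^3/6, 1 - τ^2/2 + τ^4/24] := by
    intro τ
    rw [hR, hA, hA, Matrix.mul_fin_two, map_fin_two]
    have he00 : ((1:ℂ) - (γ * τ) ^ 2 / 2) * (1 - ((starRingEnd ℂ) γ * τ) ^ 2 / 2)
          + (γ * τ - (γ * τ) ^ 3 / 4) * (-((starRingEnd ℂ) γ * τ))
          = ((1 - τ^2/2 + τ^4/24 : ℝ) : ℂ)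
            + ((Real.sqrt 3 * τ^4 / 72 : ℝ) : ℂ) * Complex.I := by
        rw [hγc, hγ]
        push_cast
        linear_combination ((-1/288 : ℂ)*(Real.sqrt 3 : ℂ)^2*(τ:ℂ)^4
            + (-1/864 : ℂ)*Complex.I*(Real.sqrt 3 : ℂ)^3*(τ:ℂ)^4) * Complex.I_sq
          + ((1/288 : ℂ)*(τ:ℂ)^4 + (1/864 : ℂ)*Complex.I*(Real.sqrt 3 : ℂ)*(τ:ℂ)^4) * sqrt3_sq
    have he01 : ((1:ℂ) - (γ * τ) ^ 2 / 2) * ((starRingEnd ℂ) γ * τ - ((starRingEnd ℂ) γ * τ) ^ 3 / 4)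
          + (γ * τ - (γ * τ) ^ 3 / 4) * (1 - ((starRingEnd ℂ) γ * τ) ^ 2 / 2)
          = ((τ - τ^3/6 + τ^5/72 : ℝ) : ℂ) := by
        rw [hγc, hγ]
        push_cast
        linear_combination ((-1/144 : ℂ)*(Real.sqrt 3 : ℂ)^2*(τ:ℂ)^3
            + (-1/576 : ℂ)*(Real.sqrt 3 : ℂ)^2*(τ:ℂ)^5
            + (-1/10368 : ℂ)*(Real.sqrt 3 : ℂ)^4*(τ:ℂ)^5
            + (1/10368 : ℂ)*Complex.I^2*(Real.sqrt 3 : ℂ)^4*(τ:ℂ)^5) * Complex.I_sq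
          + ((1/144 : ℂ)*(τ:ℂ)^3 + (7/3456 : ℂ)*(τ:ℂ)^5
            + (1/10368 : ℂ)*(Real.sqrt 3 : ℂ)^2*(τ:ℂ)^5) * sqrt3_sq
    have he10 : (-(γ * τ)) * (1 - ((starRingEnd ℂ) γ * τ) ^ 2 / 2)
          + ((1:ℂ) - (γ * τ) ^ 2 / 2) * (-((starRingEnd ℂ) γ * τ))
          = ((-τ + τ^3/6 : ℝ) : ℂ) := by
        rw [hγc, hγ]
        push_cast
        linear_combination ((-1/72 : ℂ)*(Real.sqrt 3 : ℂ)^2*(τ:ℂ)^3) * Complex.I_sq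
          + ((1/72 : ℂ)*(τ:ℂ)^3) * sqrt3_sq
    have he11 : (-(γ * τ)) * ((starRingEnd ℂ) γ * τ - ((starRingEnd ℂ) γ * τ) ^ 3 / 4)
          + ((1:ℂ) - (γ * τ) ^ 2 / 2) * (1 - ((starRingEnd ℂ) γ * τ) ^ 2 / 2)
          = ((1 - τ^2/2 + τ^4/24 : ℝ) : ℂ)
            + ((-(Real.sqrt 3 * τ^4 / 72) : ℝ) : ℂ) * Complex.I := by
        rw [hγc, hγ]
        push_cast
        linear_combination ((-1/288 : ℂ)*(Real.sqrt 3 : ℂ)^2*(τ:ℂ)^4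
            + (1/864 : ℂ)*Complex.I*(Real.sqrt 3 : ℂ)^3*(τ:ℂ)^4) * Complex.I_sq
          + ((1/288 : ℂ)*(τ:ℂ)^4 + (-1/864 : ℂ)*Complex.I*(Real.sqrt 3 : ℂ)*(τ:ℂ)^4) * sqrt3_sq
    rw [he00, he01, he10, he11]
    norm_num [Complex.add_re, Complex.ofReal_re, Complex.mul_re, Complex.I_re, Complex.I_im,
      Complex.ofReal_im, ← Complex.ofReal_pow]
  -- entry expressions
  have h00 : (fun τ : ℝ => (MH τ - R τ) 0 0)
      = fun τ : ℝ => Real.cos τ - (1 - τ^2/2 + τ^4/24) := by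
    funext τ; rw [Matrix.sub_apply, hMH, hRval]; simp
  have h11 : (fun τ : ℝ => (MH τ - R τ) 1 1)
      = fun τ : ℝ => Real.cos τ - (1 - τ^2/2 + τ^4/24) := by
    funext τ; rw [Matrix.sub_apply, hMH, hRval]; simp
  have h01 : (fun τ : ℝ => (MH τ - R τ) 0 1 + τ ^ 5 / 180)
      = fun τ : ℝ => Real.sin τ - (τ - τ^3/6 + τ^5/120) := by
    funext τ; rw [Matrix.sub_apply, hMH, hRval]; simp; ring
  have h10 : (fun τ : ℝ => (MH τ - R τ) 1 0 + τ ^ 5 / 120)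
      = fun τ : ℝ => -(Real.sin τ - (τ - τ^3/6 + τ^5/120)) := by
    funext τ; rw [Matrix.sub_apply, hMH, hRval]; simp; ring
  have o00 : (fun τ : ℝ => (MH τ - R τ) 0 0) =O[nhds 0] fun τ : ℝ => τ ^ 5 :=
    (h00 ▸ cosO).trans pow6O
  have o11 : (fun τ : ℝ => (MH τ - R τ) 1 1) =O[nhds 0] fun τ : ℝ => τ ^ 5 :=
    (h11 ▸ cosO).trans pow6O
  have o01 : (fun τ : ℝ => (MH τ - R τ) 0 1) =O[nhds 0] fun τ : ℝ => τ ^ 5 := by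
    have heq : (fun τ : ℝ => (MH τ - R τ) 0 1)
        = fun τ : ℝ => ((MH τ - R τ) 0 1 + τ ^ 5 / 180) - τ ^ 5 / 180 := by
      funext τ; ring
    rw [heq]
    exact ((h01 ▸ sinO).trans pow6O).sub (pow5O 180)
  have o10 : (fun τ : ℝ => (MH τ - R τ) 1 0) =O[nhds 0] fun τ : ℝ => τ ^ 5 := by
    have heq : (fun τ : ℝ => (MH τ - R τ) 1 0)
        = fun τ : ℝ => ((MH τ - R τ) 1 0 + τ ^ 5 / 120) - τ ^ 5 / 120 := by
      funext τ; ring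
    rw [heq]
    exact ((h10 ▸ sinO.neg_left).trans pow6O).sub (pow5O 120)
  refine ⟨by rw [h00]; exact cosO, by rw [h11]; exact cosO,
    by rw [h01]; exact sinO, by rw [h10]; exact sinO.neg_left, ?_⟩
  intro i j
  fin_cases i <;> fin_cases j <;>
    first | exact o00 | exact o01 | exact o10 | exact o11
end

section
/- Let c₃ ∈ ℝ and set β := 1 − i c₃ ∈ ℂ. Let ṽ₀, w̃₀ ∈ ℂ, set M̃₀ := 4i ṽ₀ w̃₀, and let I ⊆ ℝ be an open interval containing 0 such that 1 + 2t M̃₀ ∉ (−∞, 0] for all t ∈ I. Define, using the principal branch Log of the complex logarithm, ṽ(t) := ṽ₀ · exp(−(β/2) Log(1 + 2t M̃₀)) and w̃(t) := w̃₀ · exp(−(conj(β)/2) Log(1 + 2t M̃₀)). Then for every t ∈ I: (a) ṽ and w̃ are differentiable at t with ṽ'(t) = −β · (4i ṽ(t) w̃(t)) · ṽ(t) and w̃'(t) = −conj(β) · (4i ṽ(t) w̃(t)) · w̃(t); (b) 4i ṽ(t) w̃(t) = M̃₀/(1 + 2t M̃₀); and (c) ṽ(0) = ṽ₀, w̃(0)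 = w̃₀. -/
/-- **Exact solution (eq. vtwt) of the nonlinear part of the diagonalized
complex Ginzburg–Landau system (Section 4.4 of the paper).**
With `β = 1 - i c₃`, `M̃₀ = 4i v₀ w₀` and, on an open interval `I ∋ 0` where
`1 + 2t M̃₀` stays off `(-∞, 0]`, the functions
`v(t) = v₀ exp(-(β/2) Log(1 + 2t M̃₀))` and `w(t) = w₀ exp(-(β̄/2) Log(1 + 2t M̃₀))`
solve `v' = -β M̃ v`, `w' = -β̄ M̃ w` with `M̃(t) = 4i v(t) w(t) = M̃₀/(1 + 2t M̃₀)`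
and initial values `v₀`, `w₀`. -/
theorem ginzburg_landau_nonlinear_exact_flow
    (c₃ : ℝ) (β : ℂ) (hβ : β = 1 - Complex.I * (c₃ : ℂ))
    (v₀ w₀ : ℂ) (M₀ : ℂ) (hM₀ : M₀ = 4 * Complex.I * v₀ * w₀)
    (I : Set ℝ) (hI : ∃ a b : ℝ, I = Set.Ioo a b) (h0 : (0 : ℝ) ∈ I)
    (hslit : ∀ t ∈ I, (1 + 2 * (t : ℂ) * M₀) ∈ Complex.slitPlane)
    (v w : ℝ → ℂ)
    (hv : ∀ t : ℝ, v t = v₀ * Complex.exp (-(β / 2) *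
      Complex.log (1 + 2 * (t : ℂ) * M₀)))
    (hw : ∀ t : ℝ, w t = w₀ * Complex.exp (-((starRingEnd ℂ) β / 2) *
      Complex.log (1 + 2 * (t : ℂ) * M₀))) :
    ∀ t ∈ I,
      -- (a) the differential equations
      HasDerivAt v (-β * (4 * Complex.I * v t * w t) * v t) t ∧
      HasDerivAt w (-(starRingEnd ℂ) β * (4 * Complex.I * v t * w t) * w t) t ∧
      -- (b) the modulus function
      4 * Complex.I * v t * w t = M₀ / (1 + 2 * (t : ℂ) * M₀) ∧
      -- (c) the initial values
      v 0 = v₀ ∧ w 0 = w₀ := by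
  intro t ht
  set L : ℂ := 1 + 2 * (t : ℂ) * M₀ with hL
  have hs := hslit t ht
  have hLne : L ≠ 0 := Complex.slitPlane_ne_zero hs
  -- β + conj β = 2
  have hβsum : β + (starRingEnd ℂ) β = 2 := by
    simp [hβ, Complex.ext_iff]
    norm_num
  -- (b)
  have hb : 4 * Complex.I * v t * w t = M₀ / L := by
    rw [hv, hw]
    have : Complex.exp (-(β / 2) * Complex.log L) *
        Complex.exp (-((starRingEnd ℂ) β / 2) * Complex.log L) = L⁻¹ := by
      have hsum : -(β / 2) * Complex.log L + -((starRingEnd ℂ) β / 2) * Complex.log L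
          = -Complex.log L := by
        linear_combination (-(Complex.log L) / 2) * hβsum
      rw [← Complex.exp_add, hsum, Complex.exp_neg, Complex.exp_log hLne]
    calc 4 * Complex.I * (v₀ * Complex.exp (-(β / 2) * Complex.log L)) *
            (w₀ * Complex.exp (-((starRingEnd ℂ) β / 2) * Complex.log L))
        = (4 * Complex.I * v₀ * w₀) *
            (Complex.exp (-(β / 2) * Complex.log L) *
              Complex.exp (-((starRingEnd ℂ) β / 2) * Complex.log L)) := by ring
      _ = M₀ * L⁻¹ := by rw [this, hM₀]
      _ = M₀ / L := (div_eq_mul_inv M₀ L).symm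
  -- derivative of the inner affine map
  have hinner : HasDerivAt (fun z : ℂ => 1 + 2 * z * M₀) (2 * M₀) (t : ℂ) := by
    simpa [mul_assoc, mul_comm, mul_left_comm] using
      (((hasDerivAt_id (t : ℂ)).const_mul (2 : ℂ)).mul_const M₀).const_add 1
  have hlog : HasDerivAt (fun z : ℂ => Complex.log (1 + 2 * z * M₀))
      (L⁻¹ * (2 * M₀)) (t : ℂ) :=
    by have := (Complex.hasDerivAt_log hs).comp (t : ℂ) hinner; exact this
  -- generic derivative for c * exp(γ * log (...))
  have key : ∀ c γ : ℂ, HasDerivAt (fun s : ℝ => c * Complex.exp (γ *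
      Complex.log (1 + 2 * (s : ℂ) * M₀)))
      (c * (Complex.exp (γ * Complex.log L) * (γ * (L⁻¹ * (2 * M₀))))) t := by
    intro c γ
    exact (((hlog.const_mul γ).cexp).const_mul c).comp_ofReal (z := t)
  have hvd := key v₀ (-(β / 2))
  have hwd := key w₀ (-((starRingEnd ℂ) β / 2))
  refine ⟨?_, ?_, hb, ?_, ?_⟩
  · have heq : -β * (4 * Complex.I * v t * w t) * v t =
        v₀ * (Complex.exp (-(β / 2) * Complex.log L) *
          (-(β / 2) * (L⁻¹ * (2 * M₀)))) := by
      rw [hb, hv, ← hL]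
      field_simp
    have hvfun : v = fun s : ℝ => v₀ * Complex.exp (-(β / 2) *
        Complex.log (1 + 2 * (s : ℂ) * M₀)) := funext hv
    rw [heq, hvfun]
    exact hvd
  · have heq : -(starRingEnd ℂ) β * (4 * Complex.I * v t * w t) * w t =
        w₀ * (Complex.exp (-((starRingEnd ℂ) β / 2) * Complex.log L) *
          (-((starRingEnd ℂ) β / 2) * (L⁻¹ * (2 * M₀)))) := by
      rw [hb, hw, ← hL]
      field_simp
    have hwfun : w = fun s : ℝ => w₀ * Complex.exp (-((starRingEnd ℂ) β / 2) *
        Complex.log (1 + 2 * (s : ℂ) * M₀)) := funext hw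
    rw [heq, hwfun]
    exact hwd
  · simp [hv]
  · simp [hw]
end
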